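/- Let (S,𝔉,τ) be a probabilistic metric space with continuous triangle function τ, and let I be a strongly admissible ideal on ℕ×ℕ. Every double sequence in S that is strong I-statistically convergent to some point a ∈ S is strong I-statistically pre-Cauchy. -/

import Mathlib

open Set

/-- A distance distribution function. -/
structure DDF where
  toFun : ℝ → ℝ
  mono' : Monotone toFun
  nonneg' : ∀ x, 0 ≤ toFun x
  le_one' : ∀ x, toFun x ≤ 1
  zero' : ∀ x ≤ 0, toFun x = 0
  tendsto_one' : Filter.Tendsto toFun Filter.atTop (nhds 1)
  leftCont' : ∀ x > 0, ContinuousWithinAt toFun (Set.Iio x) x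

instance : CoeFun DDF fun _ => ℝ → ℝ := ⟨DDF.toFun⟩

/-- The unit step at 0. -/
noncomputable def eps0 : DDF where
  toFun x := if 0 < x then 1 else 0
  mono' := by
    intro a b hab
    by_cases ha : 0 < a
    · simp [ha, lt_of_lt_of_le ha hab]
    · by_cases hb : 0 < b <;> simp [ha, hb]
  nonneg' := by intro x; (try dsimp only); split_ifs <;> norm_num
  le_one' := by intro x; (try dsimp only); split_ifs <;> norm_num
  zero' := by intro x hx; simp [not_lt.mpr hx]
  tendsto_one' := by
    have h : (fun _ : ℝ => (1 : ℝ)) =ᶠ[Filter.atTop]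
        fun x : ℝ => if 0 < x then (1:ℝ) else 0 := by
      filter_upwards [Filter.eventually_gt_atTop (0:ℝ)] with x hx
      simp [hx]
    exact tendsto_const_nhds.congr' h
  leftCont' := by
    intro x hx
    have h : (fun _ : ℝ => (1 : ℝ)) =ᶠ[nhdsWithin x (Set.Iio x)]
        fun y : ℝ => if 0 < y then (1:ℝ) else 0 := by
      have hev : ∀ᶠ y in nhds x, (0:ℝ) < y := eventually_gt_nhds hx
      filter_upwards [nhdsWithin_le_nhds hev] with y hy
      simp [hy]
    have : Filter.Tendsto (fun y : ℝ => if 0 < y then (1:ℝ) else 0)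
        (nhdsWithin x (Set.Iio x)) (nhds 1) := tendsto_const_nhds.congr' h
    simpa [ContinuousWithinAt, hx] using this

/-- The modified Lévy metric on distance distribution functions. -/
noncomputable def dL (F G : DDF) : ℝ :=
  sInf {h : ℝ | 0 < h ∧ h ≤ 1 ∧ ∀ x : ℝ, 0 < x → x < 1 / h →
    (F (x - h) - h ≤ G x ∧ G x ≤ F (x + h) + h ∧
     G (x - h) - h ≤ F x ∧ F x ≤ G (x + h) + h)}

/-- A probabilistic metric space under a triangle function. -/
structure PMSpace (S : Type*) where
  F : S → S → DDF
  tri : DDF → DDF → DDF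
  F_self : ∀ a, F a a = eps0
  F_ne : ∀ a b, a ≠ b → F a b ≠ eps0
  F_symm : ∀ a b, F a b = F b a
  F_triangle : ∀ a b c, ∀ x : ℝ, (tri (F a b) (F b c)) x ≤ (F a c) x
  tri_comm : ∀ G H, tri G H = tri H G
  tri_assoc : ∀ G H K, tri (tri G H) K = tri G (tri H K)
  tri_mono : ∀ G G' H, (∀ x, G x ≤ G' x) → ∀ x, (tri G H) x ≤ (tri G' H) x
  tri_id : ∀ G, tri eps0 G = G

/-- Continuity of the triangle function with respect to the Lévy metric. -/
def TriContinuous {S : Type*} (P : PMSpace S) : Prop :=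
  ∀ G H : DDF, ∀ ε > 0, ∃ η > 0, ∀ G' H' : DDF,
    dL G G' < η → dL H H' < η → dL (P.tri G H) (P.tri G' H') < ε

/-- Ideals, admissibility. -/
def IsIdeal {α : Type*} (I : Set (Set α)) : Prop :=
  ∅ ∈ I ∧ (∀ A B : Set α, A ∈ I → B ∈ I → A ∪ B ∈ I) ∧
    (∀ A B : Set α, B ⊆ A → A ∈ I → B ∈ I)

def Admissible (I : Set (Set (ℕ × ℕ))) : Prop :=
  IsIdeal I ∧ Set.univ ∉ I ∧ ∀ p : ℕ × ℕ, ({p} : Set (ℕ × ℕ)) ∈ I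

def StronglyAdmissible (I : Set (Set (ℕ × ℕ))) : Prop :=
  IsIdeal I ∧ Set.univ ∉ I ∧
    ∀ i : ℕ, ({i} ×ˢ (Set.univ : Set ℕ)) ∈ I ∧ ((Set.univ : Set ℕ) ×ˢ {i}) ∈ I

/-- `dens A m n` is `(1/(mn)) |{(j,k) ∈ A : j ≤ m, k ≤ n}|`. -/
noncomputable def dens (A : Set (ℕ × ℕ)) (m n : ℕ) : ℝ :=
  ({jk ∈ A | 1 ≤ jk.1 ∧ jk.1 ≤ m ∧ 1 ≤ jk.2 ∧ jk.2 ≤ n}.ncard : ℝ) / (m * n)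

/-- `dens2 A m n` is `(1/(m²n²)) |{((j,k),(p,q)) ∈ A : j,p ≤ m, k,q ≤ n}|`. -/
noncomputable def dens2 (A : Set ((ℕ × ℕ) × (ℕ × ℕ))) (m n : ℕ) : ℝ :=
  ({q ∈ A | 1 ≤ q.1.1 ∧ q.1.1 ≤ m ∧ 1 ≤ q.2.1 ∧ q.2.1 ≤ m ∧
      1 ≤ q.1.2 ∧ q.1.2 ≤ n ∧ 1 ≤ q.2.2 ∧ q.2.2 ≤ n}.ncard : ℝ) /
    ((m : ℝ) ^ 2 * (n : ℝ) ^ 2)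

variable {S : Type*}

/-- Strong `I`-statistical convergence in a PM space (via strong
`t`-neighbourhoods `N_a(t) = {y : F_{ay}(t) > 1 − t}`). -/
def StrongIStatConv (I : Set (Set (ℕ × ℕ))) (P : PMSpace S)
    (x : ℕ → ℕ → S) (a : S) : Prop :=
  ∀ t > (0:ℝ), ∀ δ > (0:ℝ),
    {mn : ℕ × ℕ | δ ≤ dens
      {jk : ℕ × ℕ | ¬ (1 - t < (P.F a (x jk.1 jk.2)) t)} mn.1 mn.2} ∈ I

/-- Strong `I`-statistically pre-Cauchy double sequences in a PM space (via
strong `t`-vicinities `𝔘(t) = {(a,b) : F_{ab}(t) > 1 − t}`). -/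
def StrongIStatPreCauchy (I : Set (Set (ℕ × ℕ))) (P : PMSpace S)
    (x : ℕ → ℕ → S) : Prop :=
  ∀ t > (0:ℝ), ∀ δ > (0:ℝ),
    {mn : ℕ × ℕ | δ ≤ dens2
      {q : (ℕ × ℕ) × (ℕ × ℕ) |
        ¬ (1 - t < (P.F (x q.1.1 q.1.2) (x q.2.1 q.2.2)) t)} mn.1 mn.2} ∈ I


section Aux

lemma eps0_apply (x : ℝ) : eps0 x = if 0 < x then 1 else 0 := rfl

lemma eps0_of_pos {x : ℝ} (hx : 0 < x) : eps0 x = 1 := by simp [eps0_apply, hx]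

lemma dLset_bddBelow (F G : DDF) : BddBelow {h : ℝ | 0 < h ∧ h ≤ 1 ∧ ∀ x : ℝ, 0 < x → x < 1 / h →
    (F (x - h) - h ≤ G x ∧ G x ≤ F (x + h) + h ∧
     G (x - h) - h ≤ F x ∧ F x ≤ G (x + h) + h)} :=
  ⟨0, fun _ hy => hy.1.le⟩

lemma one_mem_dLset (F G : DDF) : (1:ℝ) ∈ {h : ℝ | 0 < h ∧ h ≤ 1 ∧ ∀ x : ℝ, 0 < x → x < 1 / h →
    (F (x - h) - h ≤ G x ∧ G x ≤ F (x + h) + h ∧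
     G (x - h) - h ≤ F x ∧ F x ≤ G (x + h) + h)} := by
  refine ⟨one_pos, le_refl 1, fun x hx hx1 => ⟨?_, ?_, ?_, ?_⟩⟩
  · have := F.le_one' (x - 1); have := G.nonneg' x; linarith
  · have := G.le_one' x; have := F.nonneg' (x + 1); linarith
  · have := G.le_one' (x - 1); have := F.nonneg' x; linarith
  · have := F.le_one' x; have := G.nonneg' (x + 1); linarith

lemma dL_eps0_lt {K : DDF} {s η : ℝ} (hs : 0 < s) (hs1 : s < 1) (hsη : s < η)
    (hK : 1 - s < K s) : dL eps0 K < η := by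
  set h : ℝ := min ((s + η) / 2) ((s + 1) / 2) with hh
  have hsh : s < h := lt_min (by linarith) (by linarith)
  have hη : h < η := lt_of_le_of_lt (min_le_left _ _) (by linarith)
  have h1 : h < 1 := lt_of_le_of_lt (min_le_right _ _) (by linarith)
  have hhpos : 0 < h := hs.trans hsh
  have hmem : h ∈ {h : ℝ | 0 < h ∧ h ≤ 1 ∧ ∀ x : ℝ, 0 < x → x < 1 / h →
      (eps0 (x - h) - h ≤ K x ∧ K x ≤ eps0 (x + h) + h ∧
       K (x - h) - h ≤ eps0 x ∧ eps0 x ≤ K (x + h) + h)} := by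
    refine ⟨hhpos, h1.le, fun x hx hx1 => ⟨?_, ?_, ?_, ?_⟩⟩
    · by_cases hxh : x ≤ h
      · have h0 : eps0 (x - h) = 0 := eps0.zero' _ (by linarith)
        have := K.nonneg' x; rw [h0]; linarith
      · push_neg at hxh
        have h0 : eps0 (x - h) ≤ 1 := eps0.le_one' _
        have hmono : K s ≤ K x := K.mono' (by linarith)
        linarith
    · have h0 : eps0 (x + h) = 1 := eps0_of_pos (by linarith)
      have := K.le_one' x; rw [h0]; linarith
    · have h0 : eps0 x = 1 := eps0_of_pos hx
      have := K.le_one' (x - h); rw [h0]; linarith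
    · have h0 : eps0 x = 1 := eps0_of_pos hx
      have hmono : K s ≤ K (x + h) := K.mono' (by linarith)
      rw [h0]; linarith
  have : dL eps0 K ≤ h := csInf_le (dLset_bddBelow _ _) hmem
  linarith

lemma lt_of_dL_eps0_lt {K : DDF} {t : ℝ} (ht : 0 < t) (ht1 : t ≤ 1)
    (hd : dL eps0 K < t) : 1 - t < K t := by
  obtain ⟨h, hmem, hht⟩ := (csInf_lt_iff (dLset_bddBelow eps0 K)
    ⟨1, one_mem_dLset eps0 K⟩).mp hd
  obtain ⟨hhpos, hh1, hcond⟩ := hmem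
  have hh1' : h < 1 := hht.trans_le ht1
  have hlt : t < 1 / h := lt_of_le_of_lt ht1 ((one_lt_one_div hhpos hh1'))
  have := (hcond t ht hlt).1
  have h0 : eps0 (t - h) = 1 := eps0_of_pos (by linarith)
  rw [h0] at this
  linarith

theorem ncard_prod_fin {α β : Type*} {s : Set α} {t : Set β} (hs : s.Finite) (ht : t.Finite) :
    (s ×ˢ t).ncard = s.ncard * t.ncard := by
  classical
  have h : s ×ˢ t = ↑(hs.toFinset ×ˢ ht.toFinset) := by simp
  rw [h, Set.ncard_coe_finset, Finset.card_product, Set.ncard_eq_toFinset_card _ hs,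
    Set.ncard_eq_toFinset_card _ ht]

theorem dens_nonneg (G : Set (ℕ × ℕ)) (m n : ℕ) : 0 ≤ dens G m n := by
  unfold dens; positivity

theorem dens2_le_two_mul_dens (A : Set ((ℕ × ℕ) × (ℕ × ℕ))) (G : Set (ℕ × ℕ))
    (hAG : ∀ q ∈ A, q.1 ∈ G ∨ q.2 ∈ G) (m n : ℕ) :
    dens2 A m n ≤ 2 * dens G m n := by
  rcases Nat.eq_zero_or_pos m with hm | hm
  · have : dens2 A m n = 0 := by simp [dens2, hm]
    rw [this]
    have := dens_nonneg G m n; linarith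
  rcases Nat.eq_zero_or_pos n with hn | hn
  · have : dens2 A m n = 0 := by simp [dens2, hn]
    rw [this]
    have := dens_nonneg G m n; linarith
  set B : Set (ℕ × ℕ) := Set.Icc 1 m ×ˢ Set.Icc 1 n with hB
  have hBfin : B.Finite := (Set.finite_Icc 1 m).prod (Set.finite_Icc 1 n)
  have hBmem : ∀ jk : ℕ × ℕ, jk ∈ B ↔ 1 ≤ jk.1 ∧ jk.1 ≤ m ∧ 1 ≤ jk.2 ∧ jk.2 ≤ n := by
    intro jk; simp only [hB, Set.mem_prod, Set.mem_Icc]; tauto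
  have hBcard : B.ncard = m * n := by
    rw [hB, ncard_prod_fin (Set.finite_Icc 1 m) (Set.finite_Icc 1 n)]
    have h1 : (Set.Icc 1 m).ncard = m := by simp [Set.ncard_eq_toFinset_card']
    have h2 : (Set.Icc 1 n).ncard = n := by simp [Set.ncard_eq_toFinset_card']
    rw [h1, h2]
  set D : Set (ℕ × ℕ) := {jk ∈ G | 1 ≤ jk.1 ∧ jk.1 ≤ m ∧ 1 ≤ jk.2 ∧ jk.2 ≤ n} with hD
  have hDfin : D.Finite := hBfin.subset (fun jk hjk => (hBmem jk).mpr hjk.2)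
  set Q : Set ((ℕ × ℕ) × (ℕ × ℕ)) := {q ∈ A | 1 ≤ q.1.1 ∧ q.1.1 ≤ m ∧ 1 ≤ q.2.1 ∧ q.2.1 ≤ m ∧
      1 ≤ q.1.2 ∧ q.1.2 ≤ n ∧ 1 ≤ q.2.2 ∧ q.2.2 ≤ n} with hQ
  have hQsub : Q ⊆ (D ×ˢ B) ∪ (B ×ˢ D) := by
    rintro ⟨⟨j,k⟩,⟨p,q⟩⟩ ⟨hqA, h1, h2, h3, h4, h5, h6, h7, h8⟩
    have hb1 : ((j,k) : ℕ × ℕ) ∈ B := (hBmem _).mpr ⟨h1, h2, h5, h6⟩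
    have hb2 : ((p,q) : ℕ × ℕ) ∈ B := (hBmem _).mpr ⟨h3, h4, h7, h8⟩
    rcases hAG _ hqA with hg | hg
    · exact Or.inl ⟨⟨hg, h1, h2, h5, h6⟩, hb2⟩
    · exact Or.inr ⟨hb1, ⟨hg, h3, h4, h7, h8⟩⟩
  have hcount : Q.ncard ≤ 2 * D.ncard * (m * n) := by
    have h1 : Q.ncard ≤ ((D ×ˢ B) ∪ (B ×ˢ D)).ncard :=
      Set.ncard_le_ncard hQsub (((hDfin.prod hBfin).union (hBfin.prod hDfin)))
    have h2 : ((D ×ˢ B) ∪ (B ×ˢ D)).ncard ≤ (D ×ˢ B).ncard + (B ×ˢ D).ncard :=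
      Set.ncard_union_le _ _
    rw [ncard_prod_fin hDfin hBfin, ncard_prod_fin hBfin hDfin, hBcard] at h2
    calc Q.ncard ≤ D.ncard * (m*n) + (m*n) * D.ncard := h1.trans h2
    _ = 2 * D.ncard * (m*n) := by ring
  have hcountR : (Q.ncard : ℝ) ≤ 2 * (D.ncard : ℝ) * (m * n) := by exact_mod_cast hcount
  have hden : ((m:ℝ)^2 * (n:ℝ)^2) = ((m:ℝ)*n) * ((m:ℝ)*n) := by ring
  have hd2 : dens2 A m n = (Q.ncard : ℝ) / ((m:ℝ)^2 * (n:ℝ)^2) := rfl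
  rw [hd2, hden]
  have hdG : dens G m n = (D.ncard : ℝ) / ((m:ℝ)*n) := by
    simp [dens, hD]
  rw [hdG]
  rw [div_le_iff₀ (by positivity)]
  have heq : 2 * ((D.ncard:ℝ) / ((m:ℝ)*n)) * (((m:ℝ)*n) * ((m:ℝ)*n))
      = 2 * (D.ncard:ℝ) * ((m:ℝ)*n) := by
    field_simp
  rw [heq]; exact hcountR

end Aux

/-- In a PM space with continuous triangle function, every strong
`I`-statistically convergent double sequence is strong `I`-statistically
pre-Cauchy. -/
theorem strongIStatConv_implies_strongIStatPreCauchy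
    (P : PMSpace S) (hτ : TriContinuous P)
    (I : Set (Set (ℕ × ℕ))) (hI : StronglyAdmissible I)
    (x : ℕ → ℕ → S) (a : S) (hx : StrongIStatConv I P x a) :
    StrongIStatPreCauchy I P x := by
  obtain ⟨⟨hIempty, hIunion, hIsub⟩, hIuniv, hIrows⟩ := hI
  intro t ht δ hδ
  set t' : ℝ := min t (1/2) with ht'def
  have ht'pos : 0 < t' := lt_min ht (by norm_num)
  have ht'le : t' ≤ t := min_le_left _ _
  have ht'half : t' ≤ 1/2 := min_le_right _ _
  obtain ⟨η, hηpos, hτ'⟩ := hτ eps0 eps0 t' ht'pos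
  set s : ℝ := min (η/2) (1/2) with hsdef
  have hspos : 0 < s := lt_min (by linarith) (by norm_num)
  have hsη : s < η := lt_of_le_of_lt (min_le_left _ _) (by linarith)
  have hs1 : s < 1 := lt_of_le_of_lt (min_le_right _ _) (by norm_num)
  have key : ∀ y z : S, 1 - s < (P.F a y) s → 1 - s < (P.F a z) s →
      1 - t < (P.F y z) t := by
    intro y z hy hz
    have h1 : dL eps0 (P.F a y) < η := dL_eps0_lt hspos hs1 hsη hy
    have h2 : dL eps0 (P.F a z) < η := dL_eps0_lt hspos hs1 hsη hz
    have h3 := hτ' _ _ h1 h2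
    rw [P.tri_id] at h3
    have h4 : 1 - t' < (P.tri (P.F a y) (P.F a z)) t' :=
      lt_of_dL_eps0_lt ht'pos (by linarith) h3
    have h5 : (P.tri (P.F a y) (P.F a z)) t' ≤ (P.F y z) t' := by
      have := P.F_triangle y a z t'
      rwa [P.F_symm y a] at this
    have h6 : (P.F y z) t' ≤ (P.F y z) t := (P.F y z).mono' ht'le
    linarith
  set G : Set (ℕ × ℕ) := {jk | ¬ (1 - s < (P.F a (x jk.1 jk.2)) s)} with hGdef
  set A : Set ((ℕ × ℕ) × (ℕ × ℕ)) :=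
    {q | ¬ (1 - t < (P.F (x q.1.1 q.1.2) (x q.2.1 q.2.2)) t)} with hAdef
  have hAG : ∀ q ∈ A, q.1 ∈ G ∨ q.2 ∈ G := by
    intro q hq
    by_contra hcon
    push_neg at hcon
    obtain ⟨h1, h2⟩ := hcon
    simp only [hGdef, Set.mem_setOf_eq, not_not] at h1 h2
    exact hq (key _ _ h1 h2)
  have hsub : {mn : ℕ × ℕ | δ ≤ dens2 A mn.1 mn.2} ⊆
      {mn : ℕ × ℕ | δ/2 ≤ dens G mn.1 mn.2} := by
    intro mn hmn
    have h := dens2_le_two_mul_dens A G hAG mn.1 mn.2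
    simp only [Set.mem_setOf_eq] at hmn ⊢
    linarith
  exact hIsub _ _ hsub (hx s hspos (δ/2) (by linarith))
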